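/- Let A be a commutative algebra over a commutative ring R, S a multiplicative subset of A, and {d_j}_{j≥0} a higher R-derivation on A (d_0 = id, each d_j is R-linear, and d_j(ab) = Σ_{k=0}^j d_k(a) d_{j-k}(b)). Then there is a unique higher R-derivation on the localization S^{-1}A extending {d_j}. -/

import Mathlib

open PowerSeries

theorem stmt_7 (R A : Type*) [CommRing R] [CommRing A] [Algebra R A] (S : Submonoid A)
    (d : ℕ → A →ₗ[R] A) (hd0 : ∀ a, d 0 a = a)
    (hleib : ∀ (j : ℕ) (a b : A),
      d j (a * b) = ∑ k ∈ Finset.range (j + 1), d k a * d (j - k) b) :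
    ∃! D : ℕ → Localization S →ₗ[R] Localization S,
      (∀ x, D 0 x = x) ∧
      (∀ (j : ℕ) (x y : Localization S),
        D j (x * y) = ∑ k ∈ Finset.range (j + 1), D k x * D (j - k) y) ∧
      (∀ (j : ℕ) (a : A),
        D j (algebraMap A (Localization S) a) = algebraMap A (Localization S) (d j a)) := by
  classical
  set L := Localization S with hL
  set φ := algebraMap A L with hφ
  -- d j 1 = 0 for j ≥ 1
  have hd1 : ∀ j, 0 < j → d j (1 : A) = 0 := by
    intro j hj
    induction j using Nat.strong_induction_on with
    | _ j IH =>
      have h := hleib j 1 1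
      rw [mul_one, Finset.sum_range_succ, Nat.sub_self, hd0, mul_one] at h
      obtain ⟨m, rfl⟩ : ∃ m, j = m + 1 := ⟨j - 1, (Nat.succ_pred_eq_of_pos hj).symm⟩
      rw [Finset.sum_range_succ'] at h
      have hz : ∀ k ∈ Finset.range m, d (k + 1) (1:A) * d (m + 1 - (k + 1)) 1 = 0 := by
        intro k hk
        simp only [Finset.mem_range] at hk
        rw [IH (k + 1) (by omega) (by omega), zero_mul]
      rw [Finset.sum_congr rfl hz, Finset.sum_const_zero, zero_add, hd0, one_mul] at h
      -- h : d (m+1) 1 = d (m+1) 1 + d (m+1) 1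
      simp only [Nat.sub_zero] at h
      exact left_eq_add.mp h
  -- the ring hom A → PowerSeries L
  let F : A →+* PowerSeries L :=
    { toFun := fun a => PowerSeries.mk fun j => φ (d j a)
      map_one' := by
        ext j
        rcases Nat.eq_zero_or_pos j with rfl | hj
        · simp [hd0]
        · simp [coeff_mk, hd1 j hj, coeff_one, Nat.pos_iff_ne_zero.mp hj]
      map_mul' := by
        intro a b
        ext j
        rw [coeff_mk, coeff_mul, Finset.Nat.sum_antidiagonal_eq_sum_range_succ_mk,
          hleib, map_sum]
        refine Finset.sum_congr rfl fun k _ => ?_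
        simp [coeff_mk]
      map_zero' := by ext j; simp
      map_add' := by intro a b; ext j; simp }
  have hF : ∀ (a : A) (j : ℕ), coeff j (F a) = φ (d j a) := fun a j => by
    show coeff j (PowerSeries.mk fun i => φ (d i a)) = φ (d j a)
    exact coeff_mk _ _
  have hFunit : ∀ s : S, IsUnit (F s) := by
    intro s
    rw [isUnit_iff_constantCoeff]
    have h0 : constantCoeff (F s) = φ s := by
      rw [← coeff_zero_eq_constantCoeff, hF, hd0]
    rw [h0]
    exact IsLocalization.map_units L s
  let ψ : L →+* PowerSeries L := IsLocalization.lift (M := S) hFunit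
  have hψF : ∀ a : A, ψ (φ a) = F a := fun a => IsLocalization.lift_eq hFunit a
  -- constant coefficient of ψ is identity
  have hψ0 : ∀ x : L, constantCoeff (ψ x) = x := by
    have hc : (constantCoeff).comp ψ = RingHom.id L := by
      apply IsLocalization.ringHom_ext S
      ext a
      simp only [RingHom.comp_apply, RingHom.id_apply]
      rw [hψF a, ← coeff_zero_eq_constantCoeff, hF, hd0]
    intro x
    exact DFunLike.congr_fun hc x
  -- ψ of an R-scalar multiple
  have hFalg : ∀ r : R, F (algebraMap R A r) = PowerSeries.C (algebraMap R L r) := by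
    intro r
    ext j
    rcases Nat.eq_zero_or_pos j with rfl | hj
    · rw [hF, hd0, coeff_zero_C, ← IsScalarTower.algebraMap_apply]
    · rw [hF]
      have : d j (algebraMap R A r) = 0 := by
        have : (algebraMap R A r) = r • (1 : A) := (Algebra.algebraMap_eq_smul_one r)
        rw [this, map_smul, hd1 j hj, smul_zero]
      rw [this, map_zero, coeff_C, if_neg (Nat.pos_iff_ne_zero.mp hj)]
  have hψsmul : ∀ (r : R) (x : L) (j : ℕ),
      coeff j (ψ (r • x)) = r • coeff j (ψ x) := by
    intro r x j
    have h1 : (r • x) = φ (algebraMap R A r) * x := by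
      rw [Algebra.smul_def, IsScalarTower.algebraMap_apply R A L]
    rw [h1, map_mul, hψF, hFalg, ← smul_eq_C_mul, map_smul, smul_eq_mul, ← Algebra.smul_def]
  -- define D
  set D : ℕ → L →ₗ[R] L := fun j =>
    { toFun := fun x => coeff j (ψ x)
      map_add' := fun x y => by
        show coeff j (ψ (x + y)) = coeff j (ψ x) + coeff j (ψ y)
        rw [map_add, map_add]
      map_smul' := fun r x => by
        show coeff j (ψ (r • x)) = r • coeff j (ψ x)
        rw [hψsmul] } with hD
  have hDapp : ∀ (j : ℕ) (x : L), D j x = coeff j (ψ x) := fun _ _ => rfl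
  refine ⟨D, ⟨?_, ?_, ?_⟩, ?_⟩
  · intro x
    rw [hDapp, coeff_zero_eq_constantCoeff, hψ0]
  · intro j x y
    rw [hDapp, map_mul, coeff_mul, Finset.Nat.sum_antidiagonal_eq_sum_range_succ_mk]
    exact Finset.sum_congr rfl fun k _ => rfl
  · intro j a
    rw [hDapp, hψF, hF]
  · -- uniqueness
    rintro D' ⟨h0, hLb, hAm⟩
    have key : ∀ j x, D' j x = D j x := by
      intro j
      induction j using Nat.strong_induction_on with
      | _ j IH =>
        intro x
        rcases Nat.eq_zero_or_pos j with rfl | hj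
        · rw [h0, hDapp, coeff_zero_eq_constantCoeff, hψ0]
        · obtain ⟨⟨a, s⟩, rfl⟩ := IsLocalization.mk'_surjective S x
          have hspec : IsLocalization.mk' L a s * φ s = φ a := IsLocalization.mk'_spec L a s
          have e1 := hLb j (IsLocalization.mk' L a s) (φ s)
          have e2 : D j (IsLocalization.mk' L a s * φ s) =
              ∑ k ∈ Finset.range (j + 1), D k (IsLocalization.mk' L a s) * D (j - k) (φ s) := by
            rw [hDapp, map_mul, coeff_mul, Finset.Nat.sum_antidiagonal_eq_sum_range_succ_mk]
            rfl
          rw [hspec, hAm] at e1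
          rw [hspec] at e2
          have e2' : D j (φ a) = algebraMap A L (d j a) := by
            rw [hDapp, hψF, hF]
          rw [e2'] at e2
          rw [Finset.sum_range_succ, Nat.sub_self] at e1 e2
          rw [h0] at e1
          have hD0 : D 0 (φ s) = φ s := by
            rw [hDapp, coeff_zero_eq_constantCoeff, hψ0]
          rw [hD0] at e2
          have hsum : ∑ k ∈ Finset.range j, D' k (IsLocalization.mk' L a s) * D' (j - k) (φ s)
              = ∑ k ∈ Finset.range j, D k (IsLocalization.mk' L a s) * D (j - k) (φ s) := by
            refine Finset.sum_congr rfl fun k hk => ?_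
            simp only [Finset.mem_range] at hk
            rw [IH k hk, hAm, hDapp (j - k), hψF, hF]
          rw [hsum] at e1
          have := e1.symm.trans e2
          -- this : sum + D' j x * φ s = sum + D j x * φ s
          have hcan := add_left_cancel this
          exact (IsLocalization.map_units L s).mul_left_injective hcan
    funext j
    exact LinearMap.ext (key j)
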